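/- Let k ≥ 2 be an integer, let i = 1, let r, s be positive integers, and let n ≥ 0 be an integer. Then det(A_k · Q_k^{n+1}) = s^{n+k}·(-1)^{((k-1)(k+6) + 2(k+1)(n+1))/2}. -/

import Mathlib

/-- Auxiliary sequence: `genFibAux i k r s m` equals `F^i_{r,s}(k, m-1)`, i.e. the
four-parameters sequence indexed by `m = n + 1 ≥ 0`.  For `i ≤ k` the initial values
(`-1 ≤ n ≤ k-2`, i.e. `m < k`) are `r^⌊(n+1)/i⌋`, for `k < i` (`m < i`) they are
`s^⌊(n+1)/k⌋`, and for `n ≥ max{k,i} - 1` the recurrence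
`F(n) = r·F(n-i) + s·F(n-k)` holds. -/
def genFibAux (i k r s : ℕ) : ℕ → ℤ
  | m =>
    if m < max (max k i) 1 then
      if i ≤ k then (r : ℤ) ^ (m / i) else (s : ℤ) ^ (m / k)
    else
      r * genFibAux i k r s (m - max i 1) + s * genFibAux i k r s (m - max k 1)
  termination_by m => m
  decreasing_by all_goals omega

/-- The four-parameters sequence `F^i_{r,s}(k,n)` for integer `n ≥ -1`, with the
convention that it vanishes for `n ≤ -2`. -/
def genFib (i k r s : ℕ) (n : ℤ) : ℤ :=
  if n < -1 then 0 else genFibAux i k r s (n + 1).toNat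

/-- The matrix `Q_k` (rows/columns indexed by `Fin k`, corresponding to the
1-indexed rows/columns `1, …, k`): entry `1` at `(t, t+1)`; the first column has
entry `r` in row `i` and entry `s` in row `k` when `i < k`, and entry `r + s` in
row `k` when `i = k`; all other entries vanish. -/
def Qmat (i k r s : ℕ) : Matrix (Fin k) (Fin k) ℤ :=
  Matrix.of fun t j =>
    if (j : ℕ) = (t : ℕ) + 1 then 1
    else if (j : ℕ) = 0 then
      if i = k then (if (t : ℕ) = k - 1 then (r : ℤ) + s else 0)
      else if (t : ℕ) = i - 1 then (r : ℤ)
      else if (t : ℕ) = k - 1 then (s : ℤ)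
      else 0
    else 0

/-- The matrix `A_k` of initial conditions: its `(t, j)` entry (1-indexed) is
`F^i_{r,s}(k, 2k-1-t-j)`. -/
def Amat (i k r s : ℕ) : Matrix (Fin k) (Fin k) ℤ :=
  Matrix.of fun t j =>
    genFib i k r s (2 * (k : ℤ) - 3 - ((t : ℕ) : ℤ) - ((j : ℕ) : ℤ))

open Equiv Equiv.Perm Matrix

section RevSign

lemma revPerm_succ_decompose (n : ℕ) :
    (Fin.revPerm : Perm (Fin (n+1))) =
      Equiv.Perm.decomposeFin.symm (Fin.last n, Fin.revPerm * finRotate n) := by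
  ext i
  refine Fin.cases ?_ (fun x => ?_) i
  · simp
  · rw [Equiv.Perm.decomposeFin_symm_apply_succ]
    cases n with
    | zero => exact x.elim0
    | succ m =>
      simp only [Perm.mul_apply, Fin.revPerm_apply]
      rcases eq_or_ne x (Fin.last m) with h | h
      · subst h
        simp [Fin.ext_iff, swap_apply_def, Fin.val_rev]
      · have hx : (x : ℕ) < m := by
          have h2 := x.isLt
          rcases Nat.lt_or_ge (x : ℕ) m with h' | h'
          · exact h'
          · exact absurd (Fin.ext (by rw [Fin.val_last]; omega)) h
        have h1 : finRotate (m+1) x = ⟨(x:ℕ)+1, by omega⟩ := by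
          rw [Fin.ext_iff, coe_finRotate, if_neg h]
        rw [h1]
        rw [swap_apply_of_ne_of_ne]
        · simp only [Fin.ext_iff, Fin.val_rev, Fin.val_succ]
          omega
        · simp only [ne_eq, Fin.ext_iff, Fin.val_rev, Fin.val_succ, Fin.val_zero]
          omega
        · simp only [ne_eq, Fin.ext_iff, Fin.val_rev, Fin.val_succ, Fin.val_last]
          omega

lemma sign_revPerm (n : ℕ) :
    ((Perm.sign (Fin.revPerm : Perm (Fin n))) : ℤ) = (-1)^(n*(n-1)/2) := by
  induction n with
  | zero =>
    rw [Subsingleton.elim (Fin.revPerm : Perm (Fin 0)) 1]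
    simp
  | succ m ih =>
    rw [revPerm_succ_decompose, Equiv.Perm.decomposeFin.symm_sign, _root_.map_mul]
    cases m with
    | zero =>
      rw [Subsingleton.elim (Fin.revPerm : Perm (Fin 0)) 1,
        Subsingleton.elim (finRotate 0) 1]
      simp
    | succ l =>
      rw [sign_finRotate]
      have hlast : (Fin.last (l+1)) ≠ 0 := by simp [Fin.ext_iff]
      rw [if_neg hlast]
      push_cast
      rw [ih]
      have ihe : (l+1)*(l+1-1)/2 = (l+1)*l/2 := by norm_num
      have hdiv : (l+1+1)*(l+1)/2 = (l+1)*l/2 + (l+1) := by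
        rw [show (l+1+1)*(l+1) = (l+1)*l + (l+1)*2 from by ring,
          Nat.add_mul_div_right _ _ (by norm_num : 0 < 2)]
      rw [ihe, hdiv, pow_add]
      ring

end RevSign

section GenFibLemmas

variable {k r s : ℕ}

lemma genFib_neg {n : ℤ} (hn : n < -1) : genFib 1 k r s n = 0 := if_pos hn

lemma genFibAux_small (hk : 2 ≤ k) {m : ℕ} (hm : m < k) :
    genFibAux 1 k r s m = (r:ℤ)^m := by
  rw [genFibAux, if_pos (by omega : m < max (max k 1) 1), if_pos (by omega : 1 ≤ k),
    Nat.div_one]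

lemma genFib_eq_aux {n : ℤ} (hn : -1 ≤ n) :
    genFib 1 k r s n = genFibAux 1 k r s (n + 1).toNat := if_neg (by omega)

lemma genFib_small (hk : 2 ≤ k) {n : ℤ} (h1 : -1 ≤ n) (h2 : n ≤ (k:ℤ) - 2) :
    genFib 1 k r s n = (r:ℤ) ^ (n+1).toNat := by
  rw [genFib_eq_aux h1, genFibAux_small hk (by omega)]

lemma genFib_neg_one (hk : 2 ≤ k) : genFib 1 k r s (-1) = 1 := by
  rw [genFib_small hk (by omega) (by omega)]
  norm_num

lemma genFib_rec (hk : 2 ≤ k) {n : ℤ} (hn : n ≠ -1) :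
    genFib 1 k r s n = r * genFib 1 k r s (n-1) + s * genFib 1 k r s (n - k) := by
  rcases lt_or_ge n (-1) with h | h
  · rw [genFib_neg h, genFib_neg (by omega), genFib_neg (by omega)]
    ring
  · have h0 : 0 ≤ n := by omega
    rcases lt_or_ge n ((k:ℤ) - 1) with h2 | h2
    · rw [genFib_small hk (by omega) (by omega), genFib_small hk (by omega) (by omega),
        genFib_neg (by omega)]
      rw [show (n+1).toNat = (n - 1 + 1).toNat + 1 from by omega, pow_succ]
      ring
    · rw [genFib_eq_aux (by omega), genFib_eq_aux (by omega), genFib_eq_aux (by omega)]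
      rw [genFibAux]
      rw [if_neg (by omega : ¬ (n+1).toNat < max (max k 1) 1)]
      have e1 : (n+1).toNat - max 1 1 = (n - 1 + 1).toNat := by omega
      have e2 : (n+1).toNat - max k 1 = (n - k + 1).toNat := by
        have : max k 1 = k := by omega
        omega
      rw [e1, e2]

end GenFibLemmas

/-- The sliding family of matrices: `Bmat k r s N` has `(t,j)` entry `F(N - t - j)`. -/
def Bmat (k r s : ℕ) (N : ℤ) : Matrix (Fin k) (Fin k) ℤ :=
  Matrix.of fun t j => genFib 1 k r s (N - ((t:ℕ):ℤ) - ((j:ℕ):ℤ))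

section BmatLemmas

variable {k r s : ℕ}

lemma Amat_eq : Amat 1 k r s = Bmat k r s (2*(k:ℤ) - 3) := by
  ext t j
  simp only [Amat, Bmat, Matrix.of_apply]

lemma Bmat_mul_Q (hk : 2 ≤ k) {N : ℤ} (hN : (k:ℤ) - 2 ≤ N) :
    Bmat k r s N * Qmat 1 k r s = Bmat k r s (N+1) := by
  ext t j
  rw [Matrix.mul_apply]
  rcases eq_or_ne (j:ℕ) 0 with hj | hj
  · have hQ : ∀ l : Fin k, Qmat 1 k r s l j =
        (if l = (⟨0, by omega⟩ : Fin k) then (r:ℤ) else 0)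
          + (if l = (⟨k-1, by omega⟩ : Fin k) then (s:ℤ) else 0) := by
      intro l
      simp only [Qmat, Matrix.of_apply, hj, Fin.ext_iff]
      split_ifs <;> first | tauto | omega
    calc (∑ l, Bmat k r s N t l * Qmat 1 k r s l j)
        = ∑ l, ((if l = (⟨0, by omega⟩ : Fin k) then Bmat k r s N t l * r else 0)
            + (if l = (⟨k-1, by omega⟩ : Fin k) then Bmat k r s N t l * s else 0)) := by
          refine Finset.sum_congr rfl fun l _ => ?_
          rw [hQ l, mul_add]
          congr 1 <;> [skip; skip] <;> split_ifs <;> ring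
      _ = Bmat k r s N t ⟨0, by omega⟩ * r + Bmat k r s N t ⟨k-1, by omega⟩ * s := by
          rw [Finset.sum_add_distrib, Finset.sum_ite_eq' Finset.univ,
            Finset.sum_ite_eq' Finset.univ]
          simp
      _ = Bmat k r s (N+1) t j := by
          simp only [Bmat, Matrix.of_apply]
          rw [genFib_rec hk (n := N + 1 - (t:ℕ) - (j:ℕ)) (by have := t.isLt; omega)]
          have e1 : N + 1 - (t:ℕ) - (j:ℕ) - 1 = N - (t:ℕ) - ((0:ℕ):ℤ) := by
            rw [hj]; push_cast; ring
          have e2 : N + 1 - (t:ℕ) - (j:ℕ) - k = N - (t:ℕ) - (((k-1 : ℕ)):ℤ) := by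
            rw [hj]; push_cast [Nat.cast_sub (by omega : 1 ≤ k)]; ring
          rw [e1, e2]
          push_cast
          ring
  · have hjk : (j:ℕ) - 1 < k := by have := j.isLt; omega
    have hQ : ∀ l : Fin k, Qmat 1 k r s l j =
        (if l = (⟨(j:ℕ)-1, hjk⟩ : Fin k) then (1:ℤ) else 0) := by
      intro l
      simp only [Qmat, Matrix.of_apply, Fin.ext_iff]
      split_ifs <;> first | tauto | omega
    calc (∑ l, Bmat k r s N t l * Qmat 1 k r s l j)
        = ∑ l, (if l = (⟨(j:ℕ)-1, hjk⟩ : Fin k) then Bmat k r s N t l * 1 else 0) := by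
          refine Finset.sum_congr rfl fun l _ => ?_
          rw [hQ l]
          split_ifs <;> ring
      _ = Bmat k r s N t ⟨(j:ℕ)-1, hjk⟩ * 1 := by
          rw [Finset.sum_ite_eq' Finset.univ]
          simp
      _ = Bmat k r s (N+1) t j := by
          simp only [Bmat, Matrix.of_apply, mul_one]
          congr 1
          push_cast [Nat.cast_sub (by omega : 1 ≤ (j:ℕ))]
          ring

lemma Bmat_mul_Q_pow (hk : 2 ≤ k) {N : ℤ} (hN : (k:ℤ) - 2 ≤ N) (m : ℕ) :
    Bmat k r s N * (Qmat 1 k r s) ^ m = Bmat k r s (N + m) := by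
  induction m with
  | zero => simp
  | succ m ih =>
    rw [pow_succ, ← mul_assoc, ih, Bmat_mul_Q hk (by push_cast; omega)]
    push_cast
    ring_nf

lemma Qmat_det (hk : 2 ≤ k) : (Qmat 1 k r s).det = (-1)^(k-1) * s := by
  obtain ⟨m, rfl⟩ : ∃ m, k = m + 2 := ⟨k - 2, by omega⟩
  set k := m + 2 with hkdef
  have htri : ((Qmat 1 k r s).submatrix id (finRotate k)).BlockTriangular id := by
    intro t j hlt
    have hjt : (j:ℕ) < (t:ℕ) := hlt
    have hj : j ≠ Fin.last (m+1) := by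
      intro h
      subst h
      have := t.isLt
      simp [Fin.val_last] at hjt
      omega
    have hrot : ((finRotate k j : Fin k) : ℕ) = (j:ℕ) + 1 := by
      rw [coe_finRotate, if_neg hj]
    simp only [Matrix.submatrix_apply, id, Qmat, Matrix.of_apply, hrot]
    rw [if_neg (by omega), if_neg (by omega)]
  have hdiag : ∀ t : Fin k, ((Qmat 1 k r s).submatrix id (finRotate k)) t t =
      if t = Fin.last (m+1) then (s:ℤ) else 1 := by
    intro t
    rcases eq_or_ne t (Fin.last (m+1)) with h | h
    · subst h
      have hrot : ((finRotate k (Fin.last (m+1)) : Fin k) : ℕ) = 0 := by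
        rw [coe_finRotate, if_pos rfl]
      simp only [Matrix.submatrix_apply, id, Qmat, Matrix.of_apply, hrot, Fin.val_last]
      split_ifs <;> first | tauto | omega
    · have hrot : ((finRotate k t : Fin k) : ℕ) = (t:ℕ) + 1 := by
        rw [coe_finRotate, if_neg h]
      simp only [Matrix.submatrix_apply, id, Qmat, Matrix.of_apply, hrot]
      rw [if_neg h]
      split_ifs <;> first | tauto | omega
  have hdet1 : ((Qmat 1 k r s).submatrix id (finRotate k)).det = (s:ℤ) := by
    rw [Matrix.det_of_upperTriangular htri]
    calc ∏ t : Fin k, ((Qmat 1 k r s).submatrix id (finRotate k)) t t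
        = ∏ t : Fin k, (if t = Fin.last (m+1) then (s:ℤ) else 1) :=
          Finset.prod_congr rfl fun t _ => hdiag t
      _ = s := by rw [Finset.prod_ite_eq' Finset.univ]; simp
  have hperm := Matrix.det_permute' (finRotate k) (Qmat 1 k r s)
  rw [hdet1, sign_finRotate] at hperm
  push_cast at hperm
  have hsq : ((-1:ℤ)^(m+1)) * ((-1:ℤ)^(m+1)) = 1 := by
    rw [← pow_add, ← two_mul, pow_mul]
    norm_num
  have hgoal : (-1:ℤ)^(k-1) * (s:ℤ) = (-1:ℤ)^(m+1) * ((-1:ℤ)^(m+1) * (Qmat 1 k r s).det) := by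
    rw [hperm, show k - 1 = m + 1 from by omega]
  rw [hgoal, ← mul_assoc, hsq, one_mul]

lemma Bmat_det (hk : 2 ≤ k) :
    (Bmat k r s ((k:ℤ) - 2)).det = (-1 : ℤ)^(k*(k-1)/2) := by
  have harg : ∀ t j : Fin k,
      ((k:ℤ) - 2) - (t:ℕ) - ((Fin.revPerm j : Fin k) : ℕ) = (j:ℕ) - (t:ℕ) - 1 := by
    intro t j
    have hrev : ((Fin.revPerm j : Fin k) : ℕ) = k - 1 - (j:ℕ) := by
      simp [Fin.val_rev]
      omega
    rw [hrev]
    have hj := j.isLt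
    push_cast [Nat.cast_sub (by omega : (j:ℕ) ≤ k - 1), Nat.cast_sub (by omega : 1 ≤ k)]
    ring
  have htri : ((Bmat k r s ((k:ℤ) - 2)).submatrix id Fin.revPerm).BlockTriangular id := by
    intro t j hlt
    have hjt : (j:ℕ) < (t:ℕ) := hlt
    simp only [Matrix.submatrix_apply, id, Bmat, Matrix.of_apply]
    rw [harg t j, genFib_neg (by omega)]
  have hdiag : ∀ t : Fin k,
      ((Bmat k r s ((k:ℤ) - 2)).submatrix id Fin.revPerm) t t = 1 := by
    intro t
    simp only [Matrix.submatrix_apply, id, Bmat, Matrix.of_apply]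
    rw [harg t t, show ((t:ℕ):ℤ) - (t:ℕ) - 1 = -1 from by ring, genFib_neg_one hk]
  have hdet1 : ((Bmat k r s ((k:ℤ) - 2)).submatrix id Fin.revPerm).det = 1 := by
    rw [Matrix.det_of_upperTriangular htri]
    exact Finset.prod_eq_one fun t _ => hdiag t
  have hperm := Matrix.det_permute' (Fin.revPerm : Perm (Fin k)) (Bmat k r s ((k:ℤ) - 2))
  rw [hdet1, sign_revPerm k] at hperm
  push_cast at hperm
  have hsq : ((-1:ℤ)^(k*(k-1)/2)) * ((-1:ℤ)^(k*(k-1)/2)) = 1 := by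
    rw [← pow_add, ← two_mul, pow_mul]
    norm_num
  calc (Bmat k r s ((k:ℤ) - 2)).det
      = ((-1:ℤ)^(k*(k-1)/2) * (-1:ℤ)^(k*(k-1)/2)) * (Bmat k r s ((k:ℤ) - 2)).det := by
        rw [hsq, one_mul]
    _ = (-1:ℤ)^(k*(k-1)/2) := by rw [mul_assoc, ← hperm, mul_one]

end BmatLemmas

lemma even_congr_aux {A B C D : ℕ} (h : A + 2*C = B + 2*D) : Even A ↔ Even B := by
  have h1 : Even (A + 2*C) ↔ Even A := by simp [Nat.even_add]
  have h2 : Even (B + 2*D) ↔ Even B := by simp [Nat.even_add]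
  rw [← h1, h, h2]

lemma neg_one_pow_congr' {a b : ℕ} (h : Even a ↔ Even b) : ((-1:ℤ))^a = (-1)^b := by
  rcases Nat.even_or_odd a with ha | ha
  · rw [ha.neg_one_pow, (h.mp ha).neg_one_pow]
  · have hb : ¬ Even b := fun hb => (Nat.not_odd_iff_even.mpr (h.mpr hb)) ha
    rw [ha.neg_one_pow, (Nat.not_even_iff_odd.mp hb).neg_one_pow]

/-- For an integer `k ≥ 2`, `i = 1`, positive integers `r, s`,
and an integer `n ≥ 0`,
`det(A_k · Q_k^{n+1}) = s^{n+k}·(-1)^{((k-1)(k+6) + 2(k+1)(n+1))/2}`. -/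
theorem Amat_mul_Qmat_pow_det (k r s : ℕ) (hk : 2 ≤ k) (hr : 0 < r) (hs : 0 < s)
    (n : ℕ) :
    (Amat 1 k r s * (Qmat 1 k r s) ^ (n + 1)).det =
      (s : ℤ) ^ (n + k) * (-1) ^ (((k - 1) * (k + 6) + 2 * (k + 1) * (n + 1)) / 2) := by
  have hA : Amat 1 k r s * (Qmat 1 k r s)^(n+1) =
      Bmat k r s ((k:ℤ)-2) * (Qmat 1 k r s)^(k+n) := by
    rw [Amat_eq]
    have h1 : Bmat k r s (2*(k:ℤ)-3) = Bmat k r s ((k:ℤ)-2) * (Qmat 1 k r s)^(k-1) := by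
      rw [Bmat_mul_Q_pow hk (le_refl _) (k-1)]
      congr 1
      push_cast [Nat.cast_sub (by omega : 1 ≤ k)]
      ring
    rw [h1, mul_assoc, ← pow_add]
    congr 2
    omega
  rw [hA, Matrix.det_mul, Matrix.det_pow, Bmat_det hk, Qmat_det hk]
  have key : (-1:ℤ)^(k*(k-1)/2 + (k-1)*(k+n)) =
      (-1:ℤ)^(((k - 1) * (k + 6) + 2 * (k + 1) * (n + 1)) / 2) := by
    apply neg_one_pow_congr'
    obtain ⟨d, hd⟩ : ∃ d, k = 2*d+2 ∨ k = 2*d+3 := ⟨(k-2)/2, by omega⟩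
    rcases hd with hd | hd
    · subst hd
      have e1 : (2*d+2)*(2*d+2-1)/2 = (d+1)*(2*d+1) := by
        rw [show (2*d+2)*(2*d+2-1) = ((d+1)*(2*d+1))*2 from by
          rw [show 2*d+2-1 = 2*d+1 from by omega]; ring]
        exact Nat.mul_div_cancel _ (by norm_num)
      have e2 : ((2*d+2-1)*(2*d+2+6) + 2*(2*d+2+1)*(n+1))/2 =
          (2*d+1)*(d+4) + (2*d+3)*(n+1) := by
        rw [show (2*d+2-1)*(2*d+2+6) + 2*(2*d+2+1)*(n+1) =
            ((2*d+1)*(d+4) + (2*d+3)*(n+1))*2 from by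
          rw [show 2*d+2-1 = 2*d+1 from by omega]; ring]
        exact Nat.mul_div_cancel _ (by norm_num)
      rw [e1, e2, show 2*d+2-1 = 2*d+1 from by omega]
      exact even_congr_aux (C := d+n+2) (D := 2*d*d) (by ring)
    · subst hd
      have e1 : (2*d+3)*(2*d+3-1)/2 = (2*d+3)*(d+1) := by
        rw [show (2*d+3)*(2*d+3-1) = ((2*d+3)*(d+1))*2 from by
          rw [show 2*d+3-1 = 2*d+2 from by omega]; ring]
        exact Nat.mul_div_cancel _ (by norm_num)
      have e2 : ((2*d+3-1)*(2*d+3+6) + 2*(2*d+3+1)*(n+1))/2 =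
          (d+1)*(2*d+9) + (2*d+4)*(n+1) := by
        rw [show (2*d+3-1)*(2*d+3+6) + 2*(2*d+3+1)*(n+1) =
            ((d+1)*(2*d+9) + (2*d+4)*(n+1))*2 from by
          rw [show 2*d+3-1 = 2*d+2 from by omega]; ring]
        exact Nat.mul_div_cancel _ (by norm_num)
      rw [e1, e2, show 2*d+3-1 = 2*d+2 from by omega]
      exact even_congr_aux (C := n+2) (D := 2*d*d+d) (by ring)
  calc (-1:ℤ)^(k*(k-1)/2) * ((-1:ℤ)^(k-1) * (s:ℤ))^(k+n)
      = (s:ℤ)^(n+k) * (-1:ℤ)^(k*(k-1)/2 + (k-1)*(k+n)) := by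
        rw [mul_pow, ← pow_mul, pow_add, show k+n = n+k from Nat.add_comm k n]
        ring
    _ = (s : ℤ) ^ (n + k) * (-1) ^ (((k - 1) * (k + 6) + 2 * (k + 1) * (n + 1)) / 2) := by
        rw [key]
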